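/- Let X be a real Banach space satisfying property (GM): x*(x) < 1 whenever x ∈ S_X and x* is a w*-limit point of ext(B_{X*}) (i.e., x* lies in the weak* closure of ext(B_{X*}) \ {x*}). Then X satisfies property (BD): for each x ∈ S_X, sup{x*(x) : x* ∈ ext(B_{X*}) \ D(x)} < 1. -/

import Mathlib

open Filter Topology Metric
open scoped ENNReal

noncomputable section

/-- The space `ℓ₁` of absolutely summable real sequences. -/
abbrev EllOne : Type := lp (fun _ : ℕ => ℝ) 1

/-- The subspace of `ℓ∞` consisting of convergent real sequences. -/
def convSeq : Subspace ℝ (lp (fun _ : ℕ => ℝ) ∞) where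
  carrier := {f | ∃ l : ℝ, Tendsto (fun n => f n) atTop (𝓝 l)}
  add_mem' := by
    rintro f g ⟨a, ha⟩ ⟨b, hb⟩
    exact ⟨a + b, by simpa [lp.coeFn_add] using ha.add hb⟩
  zero_mem' := ⟨0, by simp [lp.coeFn_zero]⟩
  smul_mem' := by
    rintro c f ⟨a, ha⟩
    exact ⟨c * a, by simpa [lp.coeFn_smul] using ha.const_mul c⟩

/-- The Banach space `c` of convergent real sequences with the sup norm,
realized as a subspace of `ℓ∞`. -/
abbrev SpaceC : Type := ↥convSeq

/-- A normed space is polyhedral if the unit ball of each of its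
finite-dimensional subspaces is a polytope (the convex hull of finitely many points). -/
def IsPolyhedralSpace (X : Type*) [NormedAddCommGroup X] [NormedSpace ℝ X] : Prop :=
  ∀ Y : Subspace ℝ X, FiniteDimensional ℝ Y →
    ∃ F : Set Y, F.Finite ∧ closedBall (0 : Y) 1 = convexHull ℝ F

/-- The set of extreme points of the closed unit ball of the dual of `X`. -/
def extBdual (X : Type*) [NormedAddCommGroup X] [NormedSpace ℝ X] :
    Set (StrongDual ℝ X) :=
  Set.extremePoints ℝ (closedBall (0 : StrongDual ℝ X) 1)

/-- `D(x) = {x* ∈ S_{X*} : x*(x) = 1}`. -/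
def Dface {X : Type*} [NormedAddCommGroup X] [NormedSpace ℝ X] (x : X) :
    Set (StrongDual ℝ X) :=
  {f | ‖f‖ = 1 ∧ f x = 1}

/-- The set of weak*-limit points of a set `A ⊆ X*`: the functionals lying in the
weak* closure of `A` minus themselves. -/
def wstarLimitPoints {X : Type} [NormedAddCommGroup X] [NormedSpace ℝ X]
    (A : Set (StrongDual ℝ X)) : Set (StrongDual ℝ X) :=
  {f | StrongDual.toWeakDual f ∈
    closure (StrongDual.toWeakDual '' (A \ {f}))}


theorem bd_of_gm'
    {X : Type} [NormedAddCommGroup X] [NormedSpace ℝ X] [CompleteSpace X]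
    (hgm : ∀ x : X, ‖x‖ = 1 → ∀ f ∈ ({f | StrongDual.toWeakDual f ∈
      closure (StrongDual.toWeakDual '' ((Set.extremePoints ℝ (closedBall (0 : StrongDual ℝ X) 1)) \ {f}))} : Set _), f x < 1) :
    ∀ x : X, ‖x‖ = 1 →
      sSup ((fun f : StrongDual ℝ X => f x) '' ((Set.extremePoints ℝ (closedBall (0 : StrongDual ℝ X) 1)) \ {f | ‖f‖ = 1 ∧ f x = 1})) < 1 := by
  intro x hx
  set E := Set.extremePoints ℝ (closedBall (0 : StrongDual ℝ X) 1) with hE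
  set S := (fun f : StrongDual ℝ X => f x) '' (E \ {f | ‖f‖ = 1 ∧ f x = 1}) with hS
  have hub : ∀ y ∈ S, y ≤ 1 := by
    rintro y ⟨f, ⟨hfE, _⟩, rfl⟩
    have hf1 : ‖f‖ ≤ 1 := by
      have := extremePoints_subset hfE
      simpa [mem_closedBall_zero_iff] using this
    calc f x ≤ ‖f‖ * ‖x‖ := le_trans (le_abs_self _) (f.le_opNorm x)
      _ ≤ 1 := by rw [hx]; simpa using hf1
  rcases S.eq_empty_or_nonempty with h | hne
  · rw [h, Real.sSup_empty]; norm_num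
  by_contra hlt
  push_neg at hlt
  have hsup : sSup S = 1 := le_antisymm (csSup_le hne hub) hlt
  have h1 : (1 : ℝ) ∈ closure S := hsup ▸ (isLUB_csSup hne ⟨1, hub⟩).mem_closure hne
  -- move to weak dual
  set A' : Set (WeakDual ℝ X) := StrongDual.toWeakDual '' (E \ {f | ‖f‖ = 1 ∧ f x = 1}) with hA'
  have hAball : A' ⊆ WeakDual.toStrongDual ⁻¹' closedBall (0 : StrongDual ℝ X) 1 := by
    rintro g ⟨f, ⟨hfE, _⟩, rfl⟩
    exact extremePoints_subset hfE
  have hclball : closure A' ⊆ WeakDual.toStrongDual ⁻¹' closedBall (0 : StrongDual ℝ X) 1 :=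
    closure_minimal hAball (WeakDual.isClosed_closedBall _ _)
  have hKcompact : IsCompact (closure A') :=
    (WeakDual.isCompact_closedBall (𝕜 := ℝ) (0 : StrongDual ℝ X) 1).of_isClosed_subset
      isClosed_closure hclball
  have heval : Continuous fun g : WeakDual ℝ X => g x := WeakDual.eval_continuous x
  have hSsub : S ⊆ (fun g : WeakDual ℝ X => g x) '' closure A' := by
    rintro y ⟨f, hf, rfl⟩
    exact ⟨StrongDual.toWeakDual f, subset_closure ⟨f, hf, rfl⟩, rfl⟩
  have himcl : IsClosed ((fun g : WeakDual ℝ X => g x) '' closure A') :=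
    (hKcompact.image heval).isClosed
  have h1' : (1 : ℝ) ∈ (fun g : WeakDual ℝ X => g x) '' closure A' :=
    (closure_mono hSsub).trans himcl.closure_eq.subset h1
  obtain ⟨g, hgK, hgx⟩ := h1'
  set f : StrongDual ℝ X := WeakDual.toStrongDual g with hf
  have hfx : f x = 1 := hgx
  have hfn : ‖f‖ ≤ 1 := by simpa [mem_closedBall_zero_iff] using hclball hgK
  have hfn1 : ‖f‖ = 1 := by
    refine le_antisymm hfn ?_
    have := f.le_opNorm x
    rw [hx, mul_one] at this
    calc (1:ℝ) = f x := hfx.symm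
      _ ≤ ‖f x‖ := le_abs_self _
      _ ≤ ‖f‖ := this
  have hfD : f ∈ {f : StrongDual ℝ X | ‖f‖ = 1 ∧ f x = 1} := ⟨hfn1, hfx⟩
  have hlim : f ∈ ({f | StrongDual.toWeakDual f ∈
      closure (StrongDual.toWeakDual '' (E \ {f}))} : Set (StrongDual ℝ X)) := by
    have hsub : E \ {f' | ‖f'‖ = 1 ∧ f' x = 1} ⊆ E \ {f} := by
      rintro a ⟨haE, haD⟩
      refine ⟨haE, ?_⟩
      rintro rfl
      exact haD hfD
    have : StrongDual.toWeakDual f ∈ closure A' := hgK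
    exact closure_mono (Set.image_mono hsub) this
  have := hgm x hx f hlim
  rw [hfx] at this
  exact lt_irrefl 1 this

/-- Property (GM) implies property (BD) in any real Banach space. -/
theorem bd_of_gm
    {X : Type} [NormedAddCommGroup X] [NormedSpace ℝ X] [CompleteSpace X]
    (hgm : ∀ x : X, ‖x‖ = 1 → ∀ f ∈ wstarLimitPoints (extBdual X), f x < 1) :
    ∀ x : X, ‖x‖ = 1 →
      sSup ((fun f : StrongDual ℝ X => f x) '' (extBdual X \ Dface x)) < 1 := by
  exact bd_of_gm' hgm

end
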